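/- A 2 × 2 bistochastic matrix A is an Erdős matrix if and only if A is one of the following three matrices: the identity matrix [[1,0],[0,1]], the matrix [[1/2,1/2],[1/2,1/2]], or the swap matrix [[0,1],[1,0]]. -/

import Mathlib

open Matrix BigOperators

def IsBistochastic {n : ℕ} (A : Matrix (Fin n) (Fin n) ℝ) : Prop :=
  (∀ i j, 0 ≤ A i j) ∧ (∀ i, ∑ j, A i j = 1) ∧ (∀ j, ∑ i, A i j = 1)

noncomputable def maxTr {n : ℕ} (A : Matrix (Fin n) (Fin n) ℝ) : ℝ :=
  ⨆ σ : Equiv.Perm (Fin n), ∑ i, A i (σ i)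

def frobSq {n : ℕ} (A : Matrix (Fin n) (Fin n) ℝ) : ℝ :=
  ∑ i, ∑ j, (A i j) ^ 2

def IsErdos {n : ℕ} (A : Matrix (Fin n) (Fin n) ℝ) : Prop :=
  IsBistochastic A ∧ frobSq A = maxTr A

lemma maxTr_two (A : Matrix (Fin 2) (Fin 2) ℝ) :
    maxTr A = max (A 0 0 + A 1 1) (A 0 1 + A 1 0) := by
  have key : ∀ σ : Equiv.Perm (Fin 2),
      ∑ i, A i (σ i) = A 0 0 + A 1 1 ∨ ∑ i, A i (σ i) = A 0 1 + A 1 0 := by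
    intro σ
    have hne : σ 0 ≠ σ 1 := fun h => absurd (σ.injective h) (by decide)
    have h0 : σ 0 = 0 ∨ σ 0 = 1 := by omega
    rcases h0 with h0 | h0
    · left
      have h1 : σ 1 = 1 := by omega
      simp [Fin.sum_univ_two, h0, h1]
    · right
      have h1 : σ 1 = 0 := by omega
      simp [Fin.sum_univ_two, h0, h1]
  have hbdd : BddAbove (Set.range fun σ : Equiv.Perm (Fin 2) => ∑ i, A i (σ i)) :=
    Set.Finite.bddAbove (Set.finite_range _)
  unfold maxTr
  apply le_antisymm
  · apply ciSup_le
    intro σ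
    rcases key σ with h | h <;> rw [h]
    · exact le_max_left _ _
    · exact le_max_right _ _
  · apply max_le
    · have := le_ciSup hbdd (1 : Equiv.Perm (Fin 2))
      simpa [Fin.sum_univ_two] using this
    · have := le_ciSup hbdd (Equiv.swap (0 : Fin 2) 1)
      simpa [Fin.sum_univ_two, Equiv.swap_apply_left, Equiv.swap_apply_right] using this

/-- A `2 × 2` bistochastic matrix is Erdős iff it is the identity, the all-`½` matrix,
or the swap matrix. -/
theorem erdos_two_by_two (A : Matrix (Fin 2) (Fin 2) ℝ) (hA : IsBistochastic A) :
    IsErdos A ↔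
      A = !![1, 0; 0, 1] ∨ A = !![1/2, 1/2; 1/2, 1/2] ∨ A = !![0, 1; 1, 0] := by
  obtain ⟨hpos, hrow, hcol⟩ := hA
  set a := A 0 0 with ha
  have h01 : A 0 1 = 1 - a := by
    have := hrow 0; rw [Fin.sum_univ_two] at this; linarith
  have h10 : A 1 0 = 1 - a := by
    have := hcol 0; rw [Fin.sum_univ_two] at this; linarith
  have h11 : A 1 1 = a := by
    have := hrow 1; rw [Fin.sum_univ_two] at this; linarith
  have ha0 : 0 ≤ a := hpos 0 0
  have ha1 : a ≤ 1 := by have := hpos 0 1; rw [h01] at this; linarith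
  have hAeq : A = !![a, 1 - a; 1 - a, a] := by
    ext i j
    fin_cases i <;> fin_cases j <;> simp [h01, h10, h11, ha]
  have hfrob : frobSq A = a ^ 2 + (1 - a) ^ 2 + ((1 - a) ^ 2 + a ^ 2) := by
    unfold frobSq
    rw [Fin.sum_univ_two, Fin.sum_univ_two, Fin.sum_univ_two, h01, h10, h11]
  have hmax : maxTr A = max (a + a) ((1 - a) + (1 - a)) := by
    rw [maxTr_two, h01, h10, h11]
  constructor
  · rintro ⟨-, h⟩
    rw [hfrob, hmax] at h
    rcases le_total a (1 / 2) with hle | hle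
    · have hm : max (a + a) ((1 - a) + (1 - a)) = (1 - a) + (1 - a) := by
        rw [max_eq_right]; linarith
      rw [hm] at h
      have : a * (2 * a - 1) = 0 := by nlinarith
      rcases mul_eq_zero.mp this with h' | h'
      · right; right; rw [hAeq, h']; norm_num
      · right; left
        have : a = 1 / 2 := by linarith
        rw [hAeq, this]; norm_num
    · have hm : max (a + a) ((1 - a) + (1 - a)) = a + a := by
        rw [max_eq_left]; linarith
      rw [hm] at h
      have : (a - 1) * (2 * a - 1) = 0 := by nlinarith
      rcases mul_eq_zero.mp this with h' | h'
      · left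
        have : a = 1 := by linarith
        rw [hAeq, this]; norm_num
      · right; left
        have : a = 1 / 2 := by linarith
        rw [hAeq, this]; norm_num
  · intro h
    refine ⟨⟨hpos, hrow, hcol⟩, ?_⟩
    rw [hfrob, hmax]
    rcases h with h | h | h
    · have hval : a = 1 := by rw [ha, h]; norm_num
      rw [hval]; norm_num
    · have hval : a = 1 / 2 := by rw [ha, h]; norm_num
      rw [hval]; norm_num
    · have hval : a = 0 := by rw [ha, h]; norm_num
      rw [hval]; norm_num
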